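/- Let λ ∈ ℂ with Im λ > 0 and let C > 0. For z₁, z₂ ∈ ℍ with |z₁|, |z₂| < C, the Möbius map Φ(z) = -1/(z + λ - q) (q ∈ ℝ) satisfies d(Φ(z₁), Φ(z₂)) ≤ δ · d(z₁, z₂) with δ = C/(C + Im λ) < 1. -/

import Mathlib

set_option maxHeartbeats 1000000

/-- Inverse hyperbolic cosine. -/
noncomputable def arcosh (x : ℝ) : ℝ := Real.log (x + Real.sqrt (x ^ 2 - 1))

lemma arcosh_one : arcosh 1 = 0 := by
  simp [arcosh]

lemma arcosh_nonneg {x : ℝ} (hx : 1 ≤ x) : 0 ≤ arcosh x := by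
  have : (1:ℝ) ≤ x + Real.sqrt (x ^ 2 - 1) :=
    le_add_of_le_of_nonneg hx (Real.sqrt_nonneg _)
  exact Real.log_nonneg this

lemma cubic_le_exp {x : ℝ} (hx : 0 ≤ x) : 1 + x + x ^ 2 / 2 + x ^ 3 / 6 ≤ Real.exp x := by
  have h := Real.sum_le_exp_of_nonneg hx 4
  refine le_trans (le_of_eq ?_) h
  rw [Finset.sum_range_succ, Finset.sum_range_succ, Finset.sum_range_succ,
    Finset.sum_range_succ, Finset.sum_range_zero]
  norm_num [Nat.factorial]

lemma arcosh_le_sqrt {u : ℝ} (hu : 0 ≤ u) : arcosh (1 + u) ≤ Real.sqrt (2 * u) := by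
  set x := Real.sqrt (2 * u) with hxdef
  have hx0 : 0 ≤ x := Real.sqrt_nonneg _
  have hx2 : x ^ 2 = 2 * u := Real.sq_sqrt (by linarith)
  have hpos : (0:ℝ) < 1 + u + Real.sqrt ((1 + u) ^ 2 - 1) :=
    lt_of_lt_of_le (by linarith) (le_add_of_le_of_nonneg le_rfl (Real.sqrt_nonneg _))
  rw [arcosh, Real.log_le_iff_le_exp hpos]
  have hsq : Real.sqrt ((1 + u) ^ 2 - 1) ≤ x + x ^ 3 / 8 := by
    rw [show (1+u)^2 - 1 = u^2 + 2*u by ring]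
    have h1 : u ^ 2 + 2 * u ≤ (x + x ^ 3 / 8) ^ 2 := by
      nlinarith [sq_nonneg x, pow_nonneg hx0 6]
    calc Real.sqrt (u ^ 2 + 2 * u) ≤ Real.sqrt ((x + x ^ 3 / 8) ^ 2) :=
          Real.sqrt_le_sqrt h1
      _ = x + x ^ 3 / 8 := Real.sqrt_sq (by positivity)
  have := cubic_le_exp hx0
  nlinarith [this, hsq]

lemma hasDerivAt_arcosh {x : ℝ} (hx : 1 < x) : HasDerivAt arcosh (1 / Real.sqrt (x ^ 2 - 1)) x := by
  have hs : (0:ℝ) < x ^ 2 - 1 := by nlinarith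
  have hsq : (0:ℝ) < Real.sqrt (x ^ 2 - 1) := Real.sqrt_pos.mpr hs
  have h1 : HasDerivAt (fun y : ℝ => y ^ 2 - 1) (2 * x) x := by
    simpa using ((hasDerivAt_pow 2 x).sub_const 1)
  have h2 : HasDerivAt (fun y : ℝ => Real.sqrt (y ^ 2 - 1))
      (1 / (2 * Real.sqrt (x ^ 2 - 1)) * (2 * x)) x :=
    (Real.hasDerivAt_sqrt hs.ne').comp x h1
  have h3 : HasDerivAt (fun y : ℝ => y + Real.sqrt (y ^ 2 - 1))
      (1 + 1 / (2 * Real.sqrt (x ^ 2 - 1)) * (2 * x)) x := (hasDerivAt_id x).add h2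
  have hpos : (0:ℝ) < x + Real.sqrt (x ^ 2 - 1) := by positivity
  have h4 : HasDerivAt (fun y : ℝ => Real.log (y + Real.sqrt (y ^ 2 - 1)))
      ((1 + 1 / (2 * Real.sqrt (x ^ 2 - 1)) * (2 * x)) * (x + Real.sqrt (x ^ 2 - 1))⁻¹) x := by
    simpa [mul_comm, Function.comp_def] using (Real.hasDerivAt_log hpos.ne').comp x h3
  have : (1 + 1 / (2 * Real.sqrt (x ^ 2 - 1)) * (2 * x)) * (x + Real.sqrt (x ^ 2 - 1))⁻¹
      = 1 / Real.sqrt (x ^ 2 - 1) := by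
    have hmul : Real.sqrt (x ^ 2 - 1) * Real.sqrt (x ^ 2 - 1) = x ^ 2 - 1 :=
      Real.mul_self_sqrt hs.le
    field_simp
    nlinarith [hmul]
  rw [← this]
  exact h4

lemma kal (C τ x₁ x₂ y₁ y₂ : ℝ) (hC : 0 < C) (hτ : 0 ≤ τ) (hy₁ : 0 < y₁) (hy₂ : 0 < y₂)
    (hz1 : x₁^2 + y₁^2 ≤ C^2) (hz2 : x₂^2 + y₂^2 ≤ C^2) :
    ((x₁-x₂)^2 + (y₁-y₂)^2) * ((y₁+τ)*(y₂+τ)) + 4*((y₁+τ)*(y₂+τ))^2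
      ≤ (C+τ)^2 * ((y₁+τ)+(y₂+τ))^2 := by
  have hyC1 : y₁ ≤ C := by nlinarith
  have hyC2 : y₂ ≤ C := by nlinarith
  have hx : (x₁-x₂)^2 ≤ 4*(C^2 - y₁*y₂) := by
    nlinarith [sq_nonneg (x₁+x₂), sq_nonneg (y₁-y₂)]
  have hP : (0:ℝ) < (y₁+τ)*(y₂+τ) := by positivity
  have hYC : (y₁+τ)*(y₂+τ) ≤ (C+τ)^2 := by nlinarith
  have e1 : (x₁-x₂)^2 * ((y₁+τ)*(y₂+τ)) ≤ 4*(C^2 - y₁*y₂) * ((y₁+τ)*(y₂+τ)) :=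
    mul_le_mul_of_nonneg_right hx hP.le
  have e2 : (y₁-y₂)^2 * ((y₁+τ)*(y₂+τ)) ≤ (y₁-y₂)^2 * (C+τ)^2 :=
    mul_le_mul_of_nonneg_left hYC (sq_nonneg _)
  have hsum : (C^2 - y₁*y₂) + (y₁+τ)*(y₂+τ) ≤ (C+τ)^2 := by
    nlinarith [mul_le_mul_of_nonneg_right (show y₁+y₂ ≤ 2*C by linarith) hτ]
  have e3 : 4*(C^2 - y₁*y₂) * ((y₁+τ)*(y₂+τ)) + 4*((y₁+τ)*(y₂+τ))^2
      ≤ 4*(C+τ)^2*((y₁+τ)*(y₂+τ)) := by nlinarith [mul_le_mul_of_nonneg_right hsum hP.le]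
  nlinarith [e1, e2, e3]

lemma core (C T x₁ x₂ y₁ y₂ p : ℝ) (hC : 0 < C) (hT : 0 < T) (hy₁ : 0 < y₁) (hy₂ : 0 < y₂)
    (hz1 : x₁^2+y₁^2 ≤ C^2) (hz2 : x₂^2+y₂^2 ≤ C^2)
    (hp : p = (x₁-x₂)^2 + (y₁-y₂)^2) :
    arcosh (1 + p/(2*((y₁+T)*(y₂+T)))) ≤ (C/(C+T)) * arcosh (1 + p/(2*(y₁*y₂))) := by
  rcases eq_or_lt_of_le (by positivity : (0:ℝ) ≤ (x₁-x₂)^2 + (y₁-y₂)^2) with h0 | hppos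
  · rw [hp, ← h0]
    norm_num [arcosh, Real.sqrt_zero, Real.log_one]
  · have hppos : 0 < p := hp ▸ hppos
    set g : ℝ → ℝ := fun τ => (C+τ) * arcosh (1 + p/(2*((y₁+τ)*(y₂+τ)))) with hg
    set E : ℝ → ℝ := fun τ =>
      1 * arcosh (1 + p/(2*((y₁+τ)*(y₂+τ)))) + (C + τ) *
        (1 / Real.sqrt ((1 + p/(2*((y₁+τ)*(y₂+τ))))^2 - 1) *
          ((0 * (2*((y₁+τ)*(y₂+τ))) - p * (2*(1*(y₂+τ) + (y₁+τ)*1))) / (2*((y₁+τ)*(y₂+τ)))^2))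
      with hE
    have hderiv : ∀ τ, 0 ≤ τ → HasDerivAt g (E τ) τ := by
      intro τ hτ
      have hY1 : (0:ℝ) < y₁ + τ := by linarith
      have hY2 : (0:ℝ) < y₂ + τ := by linarith
      have hD : (0:ℝ) < 2*((y₁+τ)*(y₂+τ)) := by positivity
      have hDd : HasDerivAt (fun t : ℝ => 2*((y₁+t)*(y₂+t)))
          (2*(1*(y₂+τ) + (y₁+τ)*1)) τ :=
        (((hasDerivAt_id τ).const_add y₁).mul ((hasDerivAt_id τ).const_add y₂)).const_mul 2
      have hw : HasDerivAt (fun t : ℝ => 1 + p/(2*((y₁+t)*(y₂+t))))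
          ((0 * (2*((y₁+τ)*(y₂+τ))) - p * (2*(1*(y₂+τ) + (y₁+τ)*1))) / (2*((y₁+τ)*(y₂+τ)))^2) τ :=
        ((hasDerivAt_const τ p).div hDd hD.ne').const_add 1
      have hw1 : 1 < 1 + p/(2*((y₁+τ)*(y₂+τ))) := by
        have : 0 < p/(2*((y₁+τ)*(y₂+τ))) := by positivity
        linarith
      have harc : HasDerivAt (fun t : ℝ => arcosh (1 + p/(2*((y₁+t)*(y₂+t)))))
          (1 / Real.sqrt ((1 + p/(2*((y₁+τ)*(y₂+τ))))^2 - 1) *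
            ((0 * (2*((y₁+τ)*(y₂+τ))) - p * (2*(1*(y₂+τ) + (y₁+τ)*1))) / (2*((y₁+τ)*(y₂+τ)))^2)) τ :=
        by have := (hasDerivAt_arcosh hw1).comp τ hw; exact this
      have hgd := ((hasDerivAt_id τ).const_add C).mul harc
      simpa only [id_eq, Pi.mul_def] using hgd
    have hEnonpos : ∀ τ, 0 ≤ τ → E τ ≤ 0 := by
      intro τ hτ
      have hY1 : (0:ℝ) < y₁ + τ := by linarith
      have hY2 : (0:ℝ) < y₂ + τ := by linarith
      set D : ℝ := 2*((y₁+τ)*(y₂+τ)) with hDdef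
      have hD : (0:ℝ) < D := by positivity
      set u : ℝ := p / D with hu
      have hupos : 0 < u := by positivity
      have hw2 : (0:ℝ) < (1+u)^2 - 1 := by nlinarith
      set S : ℝ := Real.sqrt ((1+u)^2 - 1) with hS
      have hSpos : (0:ℝ) < S := Real.sqrt_pos.mpr hw2
      set N : ℝ := p * (2*((y₂+τ)+(y₁+τ))) with hN
      have hEeq : E τ = arcosh (1+u) - (C+τ) * N / D^2 / S := by
        rw [hE]
        simp only [← hDdef, ← hu, ← hS, one_mul, mul_one, ← hN]
        ring
      rw [hEeq, sub_nonpos]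
      rw [le_div_iff₀ hSpos]
      have h1 : arcosh (1+u) ≤ Real.sqrt (2*u) := arcosh_le_sqrt hupos.le
      have hRpos : (0:ℝ) ≤ (C+τ) * N / D^2 := by
        rw [hN]; positivity
      have key : 2*u * ((1+u)^2 - 1) ≤ ((C+τ) * N / D^2)^2 := by
        have hk := kal C τ x₁ x₂ y₁ y₂ hC hτ hy₁ hy₂ hz1 hz2
        rw [← hp] at hk
        have e1 : 2*u * ((1+u)^2 - 1) = (p^2*(2*p*D + 4*D^2))/D^4 := by
          rw [hu]; field_simp; ring
        have e2 : ((C+τ) * N / D^2)^2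
            = (p^2*(4*(C+τ)^2*((y₁+τ)+(y₂+τ))^2))/D^4 := by
          rw [hN]; field_simp; ring
        rw [e1, e2, div_le_div_iff₀ (by positivity : (0:ℝ) < D^4) (by positivity : (0:ℝ) < D^4)]
        have h4 : 2*p*D + 4*D^2 ≤ 4*(C+τ)^2*((y₁+τ)+(y₂+τ))^2 := by
          rw [hDdef]; linarith [hk]
        have h5 : p^2*(2*p*D+4*D^2) ≤ p^2*(4*(C+τ)^2*((y₁+τ)+(y₂+τ))^2) :=
          mul_le_mul_of_nonneg_left h4 (sq_nonneg p)
        exact mul_le_mul_of_nonneg_right h5 (by positivity)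
      have h2 : Real.sqrt (2*u) * S ≤ (C+τ) * N / D^2 := by
        rw [hS, ← Real.sqrt_mul (by positivity)]
        calc Real.sqrt (2*u * ((1+u)^2-1))
            ≤ Real.sqrt (((C+τ) * N / D^2)^2) := Real.sqrt_le_sqrt key
          _ = _ := Real.sqrt_sq hRpos
      calc arcosh (1+u) * S ≤ Real.sqrt (2*u) * S :=
            mul_le_mul_of_nonneg_right h1 hSpos.le
        _ ≤ (C+τ) * N / D^2 := h2
    have hanti : AntitoneOn g (Set.Icc 0 T) := by
      apply antitoneOn_of_deriv_nonpos (convex_Icc 0 T)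
      · exact fun τ hτ => ((hderiv τ hτ.1).continuousAt).continuousWithinAt
      · rw [interior_Icc]
        exact fun τ hτ => ((hderiv τ hτ.1.le).differentiableAt).differentiableWithinAt
      · rw [interior_Icc]
        intro τ hτ
        rw [(hderiv τ hτ.1.le).deriv]
        exact hEnonpos τ hτ.1.le
    have hgle : g T ≤ g 0 :=
      hanti (Set.left_mem_Icc.mpr hT.le) (Set.right_mem_Icc.mpr hT.le) hT.le
    have hg0 : g 0 = C * arcosh (1 + p/(2*(y₁*y₂))) := by simp [hg]
    have hgT : g T = (C+T) * arcosh (1 + p/(2*((y₁+T)*(y₂+T)))) := rfl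
    rw [hgT, hg0] at hgle
    rw [div_mul_eq_mul_div, le_div_iff₀ (by linarith : (0:ℝ) < C+T)]
    linarith [hgle]

/-- Hyperbolic (Poincaré) distance on the upper half-plane. -/
noncomputable def hdist (z w : ℂ) : ℝ :=
  arcosh (1 + ‖z - w‖ ^ 2 / (2 * z.im * w.im))

/-- For Im λ > 0 and |z₁|, |z₂| < C, the Möbius map Φ(z) = -1/(z+λ-q) is a
strict hyperbolic contraction with factor δ = C/(C + Im λ) < 1. -/
theorem moebius_strict_contraction (lam : ℂ) (q C : ℝ) (hlam : 0 < lam.im)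
    (hC : 0 < C) (z₁ z₂ : ℂ) (h1 : 0 < z₁.im) (h2 : 0 < z₂.im)
    (hb1 : ‖z₁‖ < C) (hb2 : ‖z₂‖ < C) :
    hdist (-1 / (z₁ + lam - (q : ℂ))) (-1 / (z₂ + lam - (q : ℂ)))
        ≤ (C / (C + lam.im)) * hdist z₁ z₂ ∧ C / (C + lam.im) < 1 := by
  constructor
  · set w₁ : ℂ := z₁ + lam - (q : ℂ) with hw₁
    set w₂ : ℂ := z₂ + lam - (q : ℂ) with hw₂
    have him1 : w₁.im = z₁.im + lam.im := by simp [hw₁]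
    have him2 : w₂.im = z₂.im + lam.im := by simp [hw₂]
    have hw1pos : 0 < w₁.im := by rw [him1]; linarith
    have hw2pos : 0 < w₂.im := by rw [him2]; linarith
    have hw1ne : w₁ ≠ 0 := fun h => by simp [h] at hw1pos
    have hw2ne : w₂ ≠ 0 := fun h => by simp [h] at hw2pos
    have hdiff : -1/w₁ - (-1/w₂) = (z₁ - z₂) / (w₁ * w₂) := by
      field_simp
      rw [hw₁, hw₂]; ring
    have himinv : ∀ w : ℂ, w ≠ 0 → (-1/w).im = w.im / Complex.normSq w := by
      intro w hw
      rw [neg_div, one_div, Complex.neg_im, Complex.inv_im, neg_div, neg_neg]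
    have harg : ‖-1/w₁ - (-1/w₂)‖ ^ 2 / (2 * (-1/w₁).im * (-1/w₂).im)
        = ‖z₁ - z₂‖ ^ 2 / (2 * ((z₁.im + lam.im) * (z₂.im + lam.im))) := by
      rw [hdiff, himinv w₁ hw1ne, himinv w₂ hw2ne, norm_div, norm_mul, div_pow]
      rw [← Complex.sq_norm w₁, ← Complex.sq_norm w₂, ← him1, ← him2]
      have ha1 : ‖w₁‖ ≠ 0 := by simpa using hw1ne
      have ha2 : ‖w₂‖ ≠ 0 := by simpa using hw2ne
      field_simp
    have hLHS : hdist (-1/w₁) (-1/w₂)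
        = arcosh (1 + ‖z₁ - z₂‖ ^ 2 / (2 * ((z₁.im + lam.im) * (z₂.im + lam.im)))) := by
      rw [hdist, harg]
    rw [hLHS]
    have hRHS : hdist z₁ z₂ = arcosh (1 + ‖z₁ - z₂‖ ^ 2 / (2 * (z₁.im * z₂.im))) := by
      rw [hdist, mul_assoc]
    rw [hRHS]
    apply core C lam.im z₁.re z₂.re z₁.im z₂.im _ hC hlam h1 h2
    · have := Complex.sq_norm z₁
      have h := hb1
      nlinarith [Complex.normSq_apply z₁, norm_nonneg z₁]
    · nlinarith [Complex.sq_norm z₂, Complex.normSq_apply z₂, norm_nonneg z₂]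
    · rw [Complex.sq_norm, Complex.normSq_apply, Complex.sub_re, Complex.sub_im]
      ring
  · rw [div_lt_one (by linarith)]
    linarith
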